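/- Define X(s) = 1 - [Γ(a+1)/(2√π Γ(a+3/2))] s^{-2a-1} · ₂F₁(a+1, a+1/2; a+3/2; -s^{-2}) for s > 0. Then X(s) = 1/2 + [Γ(a+1)/(√π Γ(a+1/2))] s · ₂F₁(a+1, 1/2; 3/2; -s²). -/

import Mathlib

open MeasureTheory

/-- The Gauss hypergeometric function `₂F₁(a,b;c;z)` (for `c > b > 0`, `z < 1`),
defined via the Euler integral representation. -/
noncomputable def hyp2F1 (a b c z : ℝ) : ℝ :=
  (Real.Gamma c / (Real.Gamma b * Real.Gamma (c - b))) *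
    ∫ t in Set.Ioo (0 : ℝ) 1, t ^ (b - 1) * (1 - t) ^ (c - b - 1) * (1 - z * t) ^ (-a)

lemma sq_rpow' {x : ℝ} (hx : 0 ≤ x) (y : ℝ) : (x^2 : ℝ) ^ (y:ℝ) = x ^ (2*y) := by
  rw [← Real.rpow_natCast x 2, ← Real.rpow_mul hx]
  norm_num

lemma beta_real' {u v : ℝ} (hu : 0 < u) (hv : 0 < v) :
    ∫ x in Set.Ioo (0:ℝ) 1, x ^ (u-1) * (1-x) ^ (v-1) =
      Real.Gamma u * Real.Gamma v / Real.Gamma (u+v) := by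
  have hB : Complex.betaIntegral u v =
      ((∫ x in Set.Ioo (0:ℝ) 1, x ^ (u-1) * (1-x) ^ (v-1) : ℝ) : ℂ) := by
    rw [Complex.betaIntegral, intervalIntegral.integral_of_le zero_le_one,
      MeasureTheory.integral_Ioc_eq_integral_Ioo]
    have hc : ∀ x ∈ Set.Ioo (0:ℝ) 1,
        (x:ℂ) ^ ((u:ℂ)-1) * ((1:ℂ)-(x:ℂ)) ^ ((v:ℂ)-1)
          = ((x ^ (u-1) * (1-x) ^ (v-1) : ℝ) : ℂ) := by
      intro x hx
      obtain ⟨hx0, hx1⟩ := hx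
      rw [Complex.ofReal_mul, ← Complex.ofReal_one, ← Complex.ofReal_sub,
        Complex.ofReal_cpow hx0.le, Complex.ofReal_cpow (by linarith : (0:ℝ) ≤ 1 - x)]
      push_cast
      ring
    exact (setIntegral_congr_fun measurableSet_Ioo hc).trans integral_ofReal
  have h := Complex.Gamma_mul_Gamma_eq_betaIntegral
      (s := (u:ℂ)) (t := (v:ℂ)) (by simpa using hu) (by simpa using hv)
  rw [hB, ← Complex.ofReal_add, Complex.Gamma_ofReal, Complex.Gamma_ofReal,
    Complex.Gamma_ofReal, ← Complex.ofReal_mul, ← Complex.ofReal_mul] at h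
  have h' : Real.Gamma u * Real.Gamma v =
      Real.Gamma (u+v) * ∫ x in Set.Ioo (0:ℝ) 1, x ^ (u-1) * (1-x) ^ (v-1) :=
    mod_cast h
  have hG : Real.Gamma (u+v) ≠ 0 := (Real.Gamma_pos_of_pos (by linarith)).ne'
  field_simp [h']
  linarith [h']

lemma hyp_eval' (A b z : ℝ) (hb : 0 < b) :
    hyp2F1 A b (b+1) (-z) = b * ∫ t in Set.Ioo (0:ℝ) 1, t ^ (b-1) * (1 + z*t) ^ (-A) := by
  unfold hyp2F1
  have h1 : b + 1 - b = 1 := by ring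
  rw [h1, Real.Gamma_one, Real.Gamma_add_one hb.ne']
  have hΓ : Real.Gamma b ≠ 0 := (Real.Gamma_pos_of_pos hb).ne'
  congr 1
  · field_simp
  · refine setIntegral_congr_fun measurableSet_Ioo fun t ht => ?_
    rw [show (1:ℝ) - 1 = 0 by norm_num, Real.rpow_zero, mul_one, neg_mul, sub_neg_eq_add]

lemma subst_B' {a s : ℝ} (hs : 0 < s) :
    ∫ u in Set.Ioo (0:ℝ) 1, u ^ (1/2 - 1 : ℝ) * (1 + s^2*u) ^ (-(a+1)) =
      (2/s) * ∫ t in Set.Ioo 0 s, (1+t^2) ^ (-(a+1)) := by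
  have himg : (fun t : ℝ => t^2/s^2) '' Set.Ioo 0 s = Set.Ioo 0 1 := by
    ext u
    constructor
    · rintro ⟨t, ⟨ht0, hts⟩, rfl⟩
      exact ⟨by positivity, by rw [div_lt_one (by positivity)]; nlinarith⟩
    · rintro ⟨hu0, hu1⟩
      refine ⟨s * Real.sqrt u, ⟨by positivity, ?_⟩, ?_⟩
      · have h1 : Real.sqrt u < 1 := by
          rw [show (1:ℝ) = Real.sqrt 1 by simp]
          exact Real.sqrt_lt_sqrt hu0.le hu1
        nlinarith [Real.sqrt_nonneg u]
      · show (s * Real.sqrt u)^2/s^2 = u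
        rw [mul_pow, Real.sq_sqrt hu0.le]
        field_simp
  have hderiv : ∀ t ∈ Set.Ioo (0:ℝ) s, HasDerivWithinAt (fun t : ℝ => t^2/s^2)
      (2*t/s^2) (Set.Ioo 0 s) t := by
    intro t ht
    have h : HasDerivAt (fun t : ℝ => t^2/s^2) (2*t/s^2) t := by
      simpa using (hasDerivAt_pow 2 t).div_const (s^2)
    exact h.hasDerivWithinAt
  have hinj : Set.InjOn (fun t : ℝ => t^2/s^2) (Set.Ioo 0 s) := by
    intro x hx y hy h
    simp only at h
    have hx2 : x^2 = y^2 := by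
      field_simp at h; exact h
    nlinarith [hx.1, hy.1]
  rw [← himg, integral_image_eq_integral_abs_deriv_smul measurableSet_Ioo hderiv hinj,
    ← MeasureTheory.integral_const_mul]
  refine setIntegral_congr_fun measurableSet_Ioo fun t ht => ?_
  obtain ⟨ht0, hts⟩ := ht
  have h1 : (1 + s^2*(t^2/s^2)) = 1 + t^2 := by field_simp
  have h2 : (t^2/s^2 : ℝ) ^ (1/2 - 1 : ℝ) = s/t := by
    rw [show (1/2 - 1 : ℝ) = -(1/2) by norm_num, Real.rpow_neg (by positivity),
      ← Real.sqrt_eq_rpow, Real.sqrt_div (sq_nonneg t), Real.sqrt_sq ht0.le,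
      Real.sqrt_sq hs.le, inv_div]
  rw [smul_eq_mul, h1, h2, abs_of_nonneg (by positivity)]
  field_simp

lemma subst_C' {a s : ℝ} (hs : 0 < s) :
    ∫ u in Set.Ioo (0:ℝ) 1, u ^ (a + 1/2 - 1 : ℝ) * (1 + (s^2)⁻¹*u) ^ (-(a+1)) =
      2 * s^(2*a+1 : ℝ) * ∫ t in Set.Ioi s, (1+t^2) ^ (-(a+1)) := by
  have himg : (fun t : ℝ => s^2/t^2) '' Set.Ioi s = Set.Ioo 0 1 := by
    ext u
    constructor
    · rintro ⟨t, ht, rfl⟩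
      rw [Set.mem_Ioi] at ht
      have ht0 : 0 < t := hs.trans ht
      exact ⟨by positivity, by rw [div_lt_one (by positivity)]; nlinarith⟩
    · rintro ⟨hu0, hu1⟩
      have h1 : 0 < Real.sqrt u := Real.sqrt_pos.mpr hu0
      have h2 : Real.sqrt u < 1 := by
        rw [show (1:ℝ) = Real.sqrt 1 by simp]
        exact Real.sqrt_lt_sqrt hu0.le hu1
      refine ⟨s / Real.sqrt u, ?_, ?_⟩
      · rw [Set.mem_Ioi, lt_div_iff₀ h1]
        nlinarith
      · show s^2/(s/Real.sqrt u)^2 = u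
        rw [div_pow, Real.sq_sqrt hu0.le]
        field_simp
  have hderiv : ∀ t ∈ Set.Ioi s, HasDerivWithinAt (fun t : ℝ => s^2/t^2)
      (-(2*s^2/t^3)) (Set.Ioi s) t := by
    intro t ht
    rw [Set.mem_Ioi] at ht
    have ht0 : 0 < t := hs.trans ht
    have h := (hasDerivAt_const t (s^2)).div (hasDerivAt_pow 2 t) (by positivity)
    have h' : HasDerivAt (fun t : ℝ => s^2/t^2) (-(2*s^2/t^3)) t := by
      refine HasDerivAt.congr_deriv h ?_
      push_cast
      field_simp
      ring
    exact h'.hasDerivWithinAt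
  have hinj : Set.InjOn (fun t : ℝ => s^2/t^2) (Set.Ioi s) := by
    intro x hx y hy h
    rw [Set.mem_Ioi] at hx hy
    simp only at h
    have hx0 : 0 < x := hs.trans hx
    have hy0 : 0 < y := hs.trans hy
    have h2 : x^2 = y^2 := by
      field_simp at h
      nlinarith
    nlinarith
  rw [← himg, integral_image_eq_integral_abs_deriv_smul measurableSet_Ioi hderiv hinj,
    ← MeasureTheory.integral_const_mul]
  refine setIntegral_congr_fun measurableSet_Ioi fun t ht => ?_
  rw [Set.mem_Ioi] at ht
  have ht0 : 0 < t := hs.trans ht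
  have h1 : (1 + (s^2)⁻¹*(s^2/t^2)) = (1+t^2)/t^2 := by field_simp; ring
  have h2 : ((1+t^2)/t^2 : ℝ) ^ (-(a+1)) = (1+t^2)^(-(a+1)) * (t:ℝ)^(2*(a+1)) := by
    rw [Real.div_rpow (by positivity) (sq_nonneg t), Real.rpow_neg (by positivity : (0:ℝ) ≤ t^2),
      div_eq_mul_inv, inv_inv, sq_rpow' ht0.le]
  have h3 : (s^2/t^2 : ℝ) ^ (a + 1/2 - 1 : ℝ) = s^(2*a-1:ℝ) / t^(2*a-1:ℝ) := by
    rw [Real.div_rpow (sq_nonneg s) (sq_nonneg t), sq_rpow' hs.le, sq_rpow' ht0.le]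
    norm_num
    ring_nf
  rw [smul_eq_mul, h1, h2, h3, abs_neg, abs_of_nonneg (by positivity)]
  have hs1 : s^(2:ℝ) * s^(2*a-1 : ℝ) = s^(2*a+1 : ℝ) := by
    rw [← Real.rpow_add hs]; ring_nf
  have ht1 : (t:ℝ)^(2*(a+1) : ℝ) = t^(3:ℝ) * t^(2*a-1 : ℝ) := by
    rw [← Real.rpow_add ht0]; ring_nf
  have hsn : s^2 = s^(2:ℝ) := by rw [← Real.rpow_natCast s 2]; norm_num
  have htn : t^3 = t^(3:ℝ) := by rw [← Real.rpow_natCast t 3]; norm_num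
  rw [hsn, htn, ht1, ← hs1]
  have p1 : (0:ℝ) < t^(3:ℝ) := Real.rpow_pos_of_pos ht0 _
  have p2 : (0:ℝ) < t^(2*a-1:ℝ) := Real.rpow_pos_of_pos ht0 _
  field_simp

lemma subst_D' {a : ℝ} :
    ∫ u in Set.Ioo (0:ℝ) 1, u ^ (a + 1/2 - 1 : ℝ) * (1-u) ^ (1/2 - 1 : ℝ) =
      2 * ∫ t in Set.Ioi (0:ℝ), (1+t^2) ^ (-(a+1)) := by
  have himg : (fun t : ℝ => 1/(1+t^2)) '' Set.Ioi 0 = Set.Ioo 0 1 := by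
    ext u
    constructor
    · rintro ⟨t, ht, rfl⟩
      rw [Set.mem_Ioi] at ht
      constructor
      · positivity
      · rw [div_lt_one (by positivity)]
        nlinarith
    · rintro ⟨hu0, hu1⟩
      have hq : (0:ℝ) ≤ (1-u)/u := div_nonneg (by linarith) hu0.le
      refine ⟨Real.sqrt ((1-u)/u), ?_, ?_⟩
      · rw [Set.mem_Ioi, Real.sqrt_pos]
        have h1u : 0 < 1 - u := by linarith
        exact div_pos h1u hu0
      · show 1/(1 + Real.sqrt ((1-u)/u)^2) = u
        rw [Real.sq_sqrt hq]
        field_simp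
        ring
  have hderiv : ∀ t ∈ Set.Ioi (0:ℝ), HasDerivWithinAt (fun t : ℝ => 1/(1+t^2))
      (-(2*t/(1+t^2)^2)) (Set.Ioi 0) t := by
    intro t ht
    rw [Set.mem_Ioi] at ht
    have h := (hasDerivAt_const t (1:ℝ)).div ((hasDerivAt_pow 2 t).const_add 1)
      (by positivity)
    have h' : HasDerivAt (fun t : ℝ => 1/(1+t^2)) (-(2*t/(1+t^2)^2)) t := by
      refine HasDerivAt.congr_deriv h ?_
      push_cast
      have h2 : (0:ℝ) < 1 + t^2 := by positivity
      field_simp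
      ring
    exact h'.hasDerivWithinAt
  have hinj : Set.InjOn (fun t : ℝ => 1/(1+t^2)) (Set.Ioi 0) := by
    intro x hx y hy h
    rw [Set.mem_Ioi] at hx hy
    simp only at h
    have hx2 : (0:ℝ) < 1 + x^2 := by positivity
    have hy2 : (0:ℝ) < 1 + y^2 := by positivity
    field_simp at h
    nlinarith
  rw [← himg, integral_image_eq_integral_abs_deriv_smul measurableSet_Ioi hderiv hinj,
    ← MeasureTheory.integral_const_mul]
  refine setIntegral_congr_fun measurableSet_Ioi fun t ht => ?_
  rw [Set.mem_Ioi] at ht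
  have hX : (0:ℝ) < 1 + t^2 := by positivity
  have h1 : (1:ℝ) - 1/(1+t^2) = t^2/(1+t^2) := by field_simp; ring
  have h2 : ((1:ℝ)/(1+t^2)) ^ (a + 1/2 - 1 : ℝ) = ((1+t^2 : ℝ)^(a - 1/2 : ℝ))⁻¹ := by
    rw [one_div, ← Real.rpow_neg_one (1+t^2), ← Real.rpow_mul hX.le,
      show (-1 : ℝ) * (a + 1/2 - 1) = -(a - 1/2) by ring, Real.rpow_neg hX.le]
  have h3 : (t^2/(1+t^2) : ℝ) ^ (1/2 - 1 : ℝ) = Real.sqrt (1+t^2) / t := by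
    rw [show (1/2 - 1 : ℝ) = -(1/2) by norm_num, Real.rpow_neg (by positivity),
      ← Real.sqrt_eq_rpow, Real.sqrt_div (sq_nonneg t), Real.sqrt_sq ht.le, inv_div]
  rw [smul_eq_mul, h1, h2, h3, abs_neg, abs_of_nonneg (by positivity),
    Real.sqrt_eq_rpow]
  have hn : ((1+t^2:ℝ))^2 = (1+t^2:ℝ)^(2:ℝ) := by
    rw [← Real.rpow_natCast (1+t^2) 2]; norm_num
  have p1 : (0:ℝ) < (1+t^2:ℝ)^(a - 1/2:ℝ) := Real.rpow_pos_of_pos hX _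
  have p2 : (0:ℝ) < (1+t^2:ℝ)^((1:ℝ)/2) := Real.rpow_pos_of_pos hX _
  have step1 : 2 * t / (1+t^2)^2 * (((1+t^2:ℝ)^(a - 1/2:ℝ))⁻¹ * ((1+t^2:ℝ)^((1:ℝ)/2) / t)) =
      2 * ((1+t^2:ℝ)^((1:ℝ)/2) / ((1+t^2:ℝ)^(2:ℝ) * (1+t^2:ℝ)^(a-1/2:ℝ))) := by
    rw [← hn]
    field_simp
  rw [step1, ← Real.rpow_add hX, ← Real.rpow_sub hX]
  congr 1
  ring_nf

lemma integrable_h' {a : ℝ} (ha : 0 < a) :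
    IntegrableOn (fun t : ℝ => (1+t^2) ^ (-(a+1))) (Set.Ioi (0:ℝ)) := by
  have hc : Continuous fun t : ℝ => (1+t^2) ^ (-(a+1)) :=
    Continuous.rpow_const (by continuity) (fun x => Or.inl (by positivity))
  have h1 : IntegrableOn (fun t : ℝ => (1+t^2) ^ (-(a+1))) (Set.Ioc (0:ℝ) 1) :=
    hc.integrableOn_Ioc
  have h2 : IntegrableOn (fun t : ℝ => (1+t^2) ^ (-(a+1))) (Set.Ioi (1:ℝ)) := by
    have hg : IntegrableOn (fun t : ℝ => t ^ (-(2*a+2) : ℝ)) (Set.Ioi (1:ℝ)) :=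
      integrableOn_Ioi_rpow_of_lt (by linarith) one_pos
    refine hg.mono' hc.aestronglyMeasurable.restrict ?_
    filter_upwards [ae_restrict_mem measurableSet_Ioi] with t ht
    rw [Set.mem_Ioi] at ht
    have ht0 : (0:ℝ) < t := lt_trans one_pos ht
    rw [Real.norm_eq_abs, abs_of_nonneg (Real.rpow_nonneg (by positivity) _)]
    have he : (t:ℝ)^(-(2*a+2):ℝ) = (t^2 : ℝ)^(-(a+1):ℝ) := by
      rw [sq_rpow' ht0.le]; congr 1; ring
    rw [he]
    exact Real.rpow_le_rpow_of_nonpos (by positivity) (by nlinarith) (by linarith)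
  have h3 := h1.union h2
  rwa [Set.Ioc_union_Ioi_eq_Ioi zero_le_one] at h3

theorem stmt10 (a : ℝ) (ha : 0 < a) (s : ℝ) (hs : 0 < s) :
    1 - Real.Gamma (a + 1) / (2 * Real.sqrt Real.pi * Real.Gamma (a + 3 / 2)) *
        s ^ (-2 * a - 1) * hyp2F1 (a + 1) (a + 1 / 2) (a + 3 / 2) (-(s ^ (2 : ℝ))⁻¹) =
      1 / 2 + Real.Gamma (a + 1) / (Real.sqrt Real.pi * Real.Gamma (a + 1 / 2)) *
        s * hyp2F1 (a + 1) (1 / 2) (3 / 2) (-s ^ 2) := by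
  have hrpow2 : s ^ (2:ℝ) = s^2 := by rw [← Real.rpow_natCast s 2]; norm_num
  -- the two hypergeometric evaluations
  have hH1 : hyp2F1 (a + 1) (a + 1 / 2) (a + 3 / 2) (-(s ^ (2:ℝ))⁻¹) =
      (a + 1/2) * (2 * s^(2*a+1 : ℝ) * ∫ t in Set.Ioi s, (1+t^2) ^ (-(a+1))) := by
    rw [hrpow2, show (a + 3/2 : ℝ) = (a + 1/2) + 1 by ring,
      hyp_eval' (a+1) (a+1/2) ((s^2)⁻¹) (by linarith), subst_C' hs]
  have hH2 : hyp2F1 (a + 1) (1 / 2) (3 / 2) (-s ^ 2) =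
      (1/2) * ((2/s) * ∫ t in Set.Ioo 0 s, (1+t^2) ^ (-(a+1))) := by
    rw [show (3/2 : ℝ) = 1/2 + 1 by norm_num,
      hyp_eval' (a+1) (1/2) (s^2) (by norm_num), subst_B' hs]
  -- total integral value
  have hval : ∫ t in Set.Ioi (0:ℝ), (1+t^2) ^ (-(a+1)) =
      Real.sqrt Real.pi * Real.Gamma (a+1/2) / (2 * Real.Gamma (a+1)) := by
    have h := subst_D' (a := a)
    rw [beta_real' (by linarith : (0:ℝ) < a + 1/2) (by norm_num : (0:ℝ) < (1/2:ℝ))] at h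
    rw [show (a + 1/2 + 1/2 : ℝ) = a + 1 by ring, Real.Gamma_one_half_eq] at h
    have hG : Real.Gamma (a+1) ≠ 0 := (Real.Gamma_pos_of_pos (by linarith)).ne'
    field_simp at h ⊢
    linarith
  -- splitting
  have hsplit : (∫ t in Set.Ioo (0:ℝ) s, (1+t^2) ^ (-(a+1))) +
      (∫ t in Set.Ioi s, (1+t^2) ^ (-(a+1))) =
      ∫ t in Set.Ioi (0:ℝ), (1+t^2) ^ (-(a+1)) := by
    rw [← MeasureTheory.integral_Ioc_eq_integral_Ioo,
      ← MeasureTheory.setIntegral_union (Set.Ioc_disjoint_Ioi le_rfl) measurableSet_Ioi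
        ((integrable_h' ha).mono_set Set.Ioc_subset_Ioi_self)
        ((integrable_h' ha).mono_set (Set.Ioi_subset_Ioi hs.le)),
      Set.Ioc_union_Ioi_eq_Ioi hs.le]
  -- Gamma and power facts
  have hG32 : Real.Gamma (a + 3/2) = (a + 1/2) * Real.Gamma (a + 1/2) := by
    rw [show (a + 3/2 : ℝ) = (a + 1/2) + 1 by ring,
      Real.Gamma_add_one (by positivity : (a + 1/2 : ℝ) ≠ 0)]
  have hpow : s ^ (-2*a - 1 : ℝ) * s ^ (2*a + 1 : ℝ) = 1 := by
    rw [← Real.rpow_add hs]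
    norm_num
  set I1 := ∫ t in Set.Ioo (0:ℝ) s, (1+t^2) ^ (-(a+1)) with hI1def
  set I2 := ∫ t in Set.Ioi s, (1+t^2) ^ (-(a+1)) with hI2def
  rw [hH1, hH2]
  set p := s ^ (-2*a - 1 : ℝ) with hpdef
  set q := s ^ (2*a + 1 : ℝ) with hqdef
  have hπ : (0:ℝ) < Real.sqrt Real.pi := Real.sqrt_pos.mpr Real.pi_pos
  have hG1 : (0:ℝ) < Real.Gamma (a+1) := Real.Gamma_pos_of_pos (by linarith)
  have hG2 : (0:ℝ) < Real.Gamma (a+1/2) := Real.Gamma_pos_of_pos (by linarith)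
  have hG3 : (0:ℝ) < Real.Gamma (a+3/2) := Real.Gamma_pos_of_pos (by linarith)
  have ha2 : (0:ℝ) < a + 1/2 := by linarith
  have hI : I1 + I2 = Real.sqrt Real.pi * Real.Gamma (a+1/2) / (2 * Real.Gamma (a+1)) := by
    rw [hI1def, hI2def, hsplit, hval]
  have key1 : Real.Gamma (a + 1) / (2 * Real.sqrt Real.pi * Real.Gamma (a + 3/2)) * p *
      ((a + 1/2) * (2 * q * I2)) =
      Real.Gamma (a + 1) / (Real.sqrt Real.pi * Real.Gamma (a + 1/2)) * I2 * (p * q) := by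
    rw [hG32]
    field_simp
  have key2 : Real.Gamma (a + 1) / (Real.sqrt Real.pi * Real.Gamma (a + 1/2)) * s *
      (1/2 * (2/s * I1)) =
      Real.Gamma (a + 1) / (Real.sqrt Real.pi * Real.Gamma (a + 1/2)) * I1 := by
    field_simp
  have hC : Real.Gamma (a + 1) / (Real.sqrt Real.pi * Real.Gamma (a + 1/2)) * (I1 + I2)
      = 1/2 := by
    rw [hI]
    field_simp
  rw [key1, hpow, mul_one, key2]
  linear_combination -hC
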